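/- Let G be a graph and let H be obtained from G by replacing each edge by two internally disjoint paths of length 2 with the same endpoints. Then the treedepth of H equals the treedepth of G plus 1 (assuming G has at least one edge). -/

import Mathlib

/-- The graph obtained from `G` by replacing each edge `{u,v}` by two internally disjoint
paths of length 2 with endpoints `u` and `v`: for each edge `e` of `G` there are two new
vertices `(e, false)` and `(e, true)`, each adjacent exactly to the two endpoints of `e`;
original edges are removed. -/
def Subdiv {V : Type*} (G : SimpleGraph V) : SimpleGraph (V ⊕ (G.edgeSet × Bool)) where
  Adj x y := match x, y with
    | Sum.inl u, Sum.inr e => u ∈ (e.1 : Sym2 V)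
    | Sum.inr e, Sum.inl u => u ∈ (e.1 : Sym2 V)
    | _, _ => False
  symm := ⟨by rintro (u | e) (v | f) h <;> exact h⟩
  loopless := ⟨by rintro (u | e) h <;> exact h⟩

/-- `anc` is (the ancestor relation of) a rooted elimination forest for `G`: a partial
order in which the ancestors of every element form a chain, such that every edge of `G`
joins an ancestor-descendant pair. -/
def IsElimForest {V : Type*} (G : SimpleGraph V) (anc : V → V → Prop) : Prop :=
  (∀ u, anc u u) ∧
  (∀ u v, anc u v → anc v u → u = v) ∧
  (∀ u v w, anc u v → anc v w → anc u w) ∧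
  (∀ u v w, anc u w → anc v w → anc u v ∨ anc v u) ∧
  (∀ u v, G.Adj u v → anc u v ∨ anc v u)

/-- The treedepth of `G`: the minimum, over elimination forests of `G`, of the maximum
number of vertices on a root-to-leaf path (i.e. the maximum number of ancestors of a
vertex, the vertex itself included). -/
noncomputable def treedepth {V : Type*} (G : SimpleGraph V) : ℕ :=
  sInf {k | ∃ anc : V → V → Prop, IsElimForest G anc ∧ ∀ v : V, {u | anc u v}.ncard ≤ k}

namespace subdivAux
open Sum Set
variable {V : Type*}

lemma tdSet_nonempty [Finite V] (G : SimpleGraph V) :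
    {k | ∃ anc : V → V → Prop, IsElimForest G anc ∧ ∀ v : V, {u | anc u v}.ncard ≤ k}.Nonempty := by
  refine ⟨Nat.card V, fun u v => WellOrderingRel u v ∨ u = v, ⟨fun u => Or.inr rfl, ?_, ?_, ?_, ?_⟩, ?_⟩
  · rintro u v (h1 | rfl) (h2 | h2)
    · exact absurd (_root_.trans h1 h2) (irrefl u)
    · exact h2.symm
    · rfl
    · rfl
  · rintro u v w (h1 | rfl) (h2 | rfl)
    · exact Or.inl (_root_.trans h1 h2)
    · exact Or.inl h1
    · exact Or.inl h2
    · exact Or.inr rfl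
  · intro u v w _ _
    rcases trichotomous_of WellOrderingRel u v with h | h | h
    · exact Or.inl (Or.inl h)
    · exact Or.inl (Or.inr h)
    · exact Or.inr (Or.inl h)
  · intro u v _
    rcases trichotomous_of WellOrderingRel u v with h | h | h
    · exact Or.inl (Or.inl h)
    · exact Or.inl (Or.inr h)
    · exact Or.inr (Or.inl h)
  · intro v
    rw [← Set.ncard_univ]
    exact Set.ncard_le_ncard (Set.subset_univ _) Set.finite_univ

lemma treedepth_mem [Finite V] (G : SimpleGraph V) :
    ∃ anc : V → V → Prop, IsElimForest G anc ∧
      ∀ v : V, {u | anc u v}.ncard ≤ treedepth G :=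
  Nat.sInf_mem (tdSet_nonempty G)

lemma treedepth_le {G : SimpleGraph V} {anc : V → V → Prop} (h : IsElimForest G anc)
    {k : ℕ} (hk : ∀ v : V, {u | anc u v}.ncard ≤ k) : treedepth G ≤ k :=
  Nat.sInf_le ⟨anc, h, hk⟩

lemma upper [Finite V] (G : SimpleGraph V) :
    treedepth (Subdiv G) ≤ treedepth G + 1 := by
  classical
  obtain ⟨anc, ⟨hr, ha, ht, hc, he⟩, hw⟩ := treedepth_mem G
  have hbot : ∀ f : G.edgeSet, ∃ w, w ∈ (f : Sym2 V) ∧ ∀ z ∈ (f : Sym2 V), anc z w := by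
    rintro ⟨f, hf⟩
    revert hf
    induction f using Sym2.ind with
    | _ a b =>
      intro hf
      have hadj : G.Adj a b := G.mem_edgeSet.mp hf
      rcases he a b hadj with h | h
      · refine ⟨b, by simp, ?_⟩
        intro z hz
        rcases Sym2.mem_iff.mp hz with rfl | rfl
        exacts [h, hr _]
      · refine ⟨a, by simp, ?_⟩
        intro z hz
        rcases Sym2.mem_iff.mp hz with rfl | rfl
        exacts [hr _, h]
  choose bot hbot1 hbot2 using hbot
  let ancH : (V ⊕ (G.edgeSet × Bool)) → (V ⊕ (G.edgeSet × Bool)) → Prop := fun x y =>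
    match x, y with
    | inl u, inl v => anc u v
    | inl u, inr m => anc u (bot m.1)
    | inr m, inr m' => m = m'
    | inr _, inl _ => False
  have hforest : IsElimForest (Subdiv G) ancH := by
    refine ⟨?_, ?_, ?_, ?_, ?_⟩
    · rintro (u | m)
      · exact hr u
      · rfl
    · rintro (u | m) (v | m') h1 h2
      · exact congrArg inl (ha u v h1 h2)
      · exact absurd h2 not_false
      · exact absurd h1 not_false
      · exact congrArg inr h1
    · rintro (u | m) (v | m') (w | m'') h1 h2
      · exact ht u v w h1 h2
      · exact ht u v _ h1 h2
      · exact absurd h2 not_false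
      · exact h2 ▸ h1
      · exact absurd h1 not_false
      · exact absurd h1 not_false
      · exact absurd h2 not_false
      · exact h1.trans h2
    · rintro (u | m) (v | m') (w | m'') h1 h2
      · exact hc u v w h1 h2
      · exact hc u v _ h1 h2
      · exact absurd h2 not_false
      · exact Or.inl (by rw [h2]; exact h1)
      · exact absurd h1 not_false
      · exact Or.inr (by rw [h1]; exact h2)
      · exact absurd h1 not_false
      · exact Or.inl (h1.trans h2.symm)
    · rintro (u | m) (v | m') h
      · exact absurd h not_false
      · exact Or.inl (hbot2 m'.1 u h)
      · exact Or.inr (hbot2 m.1 v h)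
      · exact absurd h not_false
  refine treedepth_le hforest ?_
  rintro (v | m)
  · have : {x | ancH x (inl v)} = inl '' {u | anc u v} := by
      ext (u | m)
      · simp only [Set.mem_setOf_eq, Set.mem_image]
        constructor
        · intro h; exact ⟨u, h, rfl⟩
        · rintro ⟨u', hu', h⟩; cases h; exact hu'
      · simp only [Set.mem_setOf_eq, Set.mem_image]
        constructor
        · intro h; exact absurd h not_false
        · rintro ⟨u', _, h⟩; cases h
    rw [this, Set.ncard_image_of_injective _ Sum.inl_injective]
    exact le_trans (hw v) (Nat.le_succ _)
  · have : {x | ancH x (inr m)} = insert (inr m) (inl '' {u | anc u (bot m.1)}) := by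
      ext (u | m')
      · simp only [Set.mem_setOf_eq, Set.mem_insert_iff, Set.mem_image]
        constructor
        · intro h; exact Or.inr ⟨u, h, rfl⟩
        · rintro (h | ⟨u', hu', h⟩)
          · cases h
          · cases h; exact hu'
      · simp only [Set.mem_setOf_eq, Set.mem_insert_iff, Set.mem_image]
        constructor
        · intro h; exact Or.inl (congrArg inr h)
        · rintro (h | ⟨u', _, h⟩)
          · cases h; rfl
          · cases h
    rw [this]
    refine le_trans (Set.ncard_insert_le _ _) ?_
    rw [Set.ncard_image_of_injective _ Sum.inl_injective]
    exact Nat.add_le_add_right (hw _) 1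
lemma lower [Fintype V] (G : SimpleGraph V) (hE : G.edgeSet.Nonempty) :
    treedepth G + 1 ≤ treedepth (Subdiv G) := by
  classical
  set h := treedepth (Subdiv G) with hh
  set T : Set ℕ := {n | ∃ anc : (V ⊕ (G.edgeSet × Bool)) → (V ⊕ (G.edgeSet × Bool)) → Prop,
      IsElimForest (Subdiv G) anc ∧ (∀ y, {x | anc x y}.ncard ≤ h) ∧
      n = ∑ w : V, {x | anc x (Sum.inl w)}.ncard} with hT
  have hTne : T.Nonempty := by
    obtain ⟨anc0, hF0, hw0⟩ := treedepth_mem (Subdiv G)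
    exact ⟨_, anc0, hF0, hw0, rfl⟩
  obtain ⟨anc, hF, hw, hΦ⟩ := Nat.sInf_mem hTne
  have hmin : ∀ n ∈ T, sInf T ≤ n := fun n hn => Nat.sInf_le hn
  obtain ⟨hrefl, hanti, htrans, hchain, hedge⟩ := hF
  have hstrict : ∀ (m y : V ⊕ (G.edgeSet × Bool)), anc m y → m ≠ y →
      {x | anc x m}.ncard < {x | anc x y}.ncard := by
    intro m y hmy hne
    refine Set.ncard_lt_ncard ?_ (Set.toFinite _)
    exact (Set.ssubset_iff_of_subset (fun x hx => htrans _ _ _ hx hmy)).mpr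
      ⟨y, hrefl y, fun hcon => hne (hanti _ _ hmy hcon)⟩
  -- h ≥ 2
  have hge2 : 2 ≤ h := by
    obtain ⟨f, hf⟩ := hE
    obtain ⟨a, b, hab, rfl⟩ : ∃ a b, G.Adj a b ∧ f = s(a, b) := by
      revert hf
      induction f using Sym2.ind with
      | _ a b => intro hf; exact ⟨a, b, G.mem_edgeSet.mp hf, rfl⟩
    have hadj : (Subdiv G).Adj (Sum.inl a) (Sum.inr (⟨s(a, b), hf⟩, false)) := by
      show a ∈ (↑(⟨s(a, b), hf⟩ : G.edgeSet) : Sym2 V)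
      simp
    have hne : (Sum.inl a : V ⊕ (G.edgeSet × Bool)) ≠ Sum.inr (⟨s(a, b), hf⟩, false) := by simp
    rcases hedge _ _ hadj with hx | hx
    · calc 2 = ({Sum.inl a, Sum.inr (⟨s(a, b), hf⟩, false)} : Set (V ⊕ (G.edgeSet × Bool))).ncard :=
          (Set.ncard_pair hne).symm
        _ ≤ {x | anc x (Sum.inr (⟨s(a, b), hf⟩, false))}.ncard := by
          refine Set.ncard_le_ncard ?_ (Set.toFinite _)
          intro x hx'
          simp only [Set.mem_insert_iff, Set.mem_singleton_iff] at hx'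
          rcases hx' with rfl | rfl
          · exact hx
          · exact hrefl _
        _ ≤ h := hw _
    · calc 2 = ({Sum.inr (⟨s(a, b), hf⟩, false), Sum.inl a} : Set (V ⊕ (G.edgeSet × Bool))).ncard :=
          (Set.ncard_pair (Ne.symm hne)).symm
        _ ≤ {x | anc x (Sum.inl a)}.ncard := by
          refine Set.ncard_le_ncard ?_ (Set.toFinite _)
          intro x hx'
          simp only [Set.mem_insert_iff, Set.mem_singleton_iff] at hx'
          rcases hx' with rfl | rfl
          · exact hx
          · exact hrefl _
        _ ≤ h := hw _
  -- no bad edges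
  have hgood : ∀ u v, G.Adj u v → anc (Sum.inl u) (Sum.inl v) ∨ anc (Sum.inl v) (Sum.inl u) := by
    intro u v huv
    by_contra hbad
    push_neg at hbad
    obtain ⟨hb1, hb2⟩ := hbad
    have hef : s(u, v) ∈ G.edgeSet := G.mem_edgeSet.mpr huv
    set e : G.edgeSet := ⟨s(u, v), hef⟩ with he_def
    have hmid : ∀ b : Bool, anc (Sum.inr (e, b)) (Sum.inl u) ∧ anc (Sum.inr (e, b)) (Sum.inl v) := by
      intro b
      have hau : (Subdiv G).Adj (Sum.inl u) (Sum.inr (e, b)) := by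
        show u ∈ (e : Sym2 V); simp [he_def]
      have hav : (Subdiv G).Adj (Sum.inl v) (Sum.inr (e, b)) := by
        show v ∈ (e : Sym2 V); simp [he_def]
      rcases hedge _ _ hau with hu' | hu' <;> rcases hedge _ _ hav with hv' | hv'
      · rcases hchain _ _ _ hu' hv' with h' | h'
        · exact absurd h' hb1
        · exact absurd h' hb2
      · exact absurd (htrans _ _ _ hu' hv') hb1
      · exact absurd (htrans _ _ _ hv' hu') hb2
      · exact ⟨hu', hv'⟩
    -- the swap permutation
    set σ : Equiv.Perm (V ⊕ (G.edgeSet × Bool)) :=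
      (Equiv.swap (Sum.inl u) (Sum.inr (e, true))).trans
        (Equiv.swap (Sum.inl v) (Sum.inr (e, false))) with hσ_def
    have hσ1 : σ (Sum.inl u) = Sum.inr (e, true) := by
      show Equiv.swap (Sum.inl v) (Sum.inr (e, false))
        (Equiv.swap (Sum.inl u) (Sum.inr (e, true)) (Sum.inl u)) = _
      rw [Equiv.swap_apply_left]
      exact Equiv.swap_apply_of_ne_of_ne (by simp) (by simp)
    have hσ2 : σ (Sum.inr (e, true)) = Sum.inl u := by
      show Equiv.swap (Sum.inl v) (Sum.inr (e, false))
        (Equiv.swap (Sum.inl u) (Sum.inr (e, true)) (Sum.inr (e, true))) = _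
      rw [Equiv.swap_apply_right]
      exact Equiv.swap_apply_of_ne_of_ne (by simp [huv.ne]) (by simp)
    have hσ3 : σ (Sum.inl v) = Sum.inr (e, false) := by
      show Equiv.swap (Sum.inl v) (Sum.inr (e, false))
        (Equiv.swap (Sum.inl u) (Sum.inr (e, true)) (Sum.inl v)) = _
      rw [Equiv.swap_apply_of_ne_of_ne (a := Sum.inl u) (b := Sum.inr (e, true))
        (by simp [huv.ne.symm]) (by simp)]
      exact Equiv.swap_apply_left _ _
    have hσ4 : σ (Sum.inr (e, false)) = Sum.inl v := by
      show Equiv.swap (Sum.inl v) (Sum.inr (e, false))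
        (Equiv.swap (Sum.inl u) (Sum.inr (e, true)) (Sum.inr (e, false))) = _
      rw [Equiv.swap_apply_of_ne_of_ne (a := Sum.inl u) (b := Sum.inr (e, true))
        (by simp) (by simp)]
      exact Equiv.swap_apply_right _ _
    have hσfix : ∀ x, x ≠ Sum.inl u → x ≠ Sum.inr (e, true) → x ≠ Sum.inl v →
        x ≠ Sum.inr (e, false) → σ x = x := by
      intro x h1 h2 h3 h4
      show Equiv.swap (Sum.inl v) (Sum.inr (e, false))
        (Equiv.swap (Sum.inl u) (Sum.inr (e, true)) x) = x
      rw [Equiv.swap_apply_of_ne_of_ne h1 h2, Equiv.swap_apply_of_ne_of_ne h3 h4]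
    have hforest' : IsElimForest (Subdiv G) (fun x y => anc (σ x) (σ y)) := by
      refine ⟨fun x => hrefl _, fun x y h1 h2 => σ.injective (hanti _ _ h1 h2),
        fun x y z h1 h2 => htrans _ _ _ h1 h2, fun x y z h1 h2 => hchain _ _ _ h1 h2, ?_⟩
      have key : ∀ (a : V) (q : G.edgeSet × Bool), (Subdiv G).Adj (Sum.inl a) (Sum.inr q) →
          anc (σ (Sum.inl a)) (σ (Sum.inr q)) ∨ anc (σ (Sum.inr q)) (σ (Sum.inl a)) := by
        intro a q hq
        have hq' : a ∈ (q.1 : Sym2 V) := hq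
        by_cases hqe : q.1 = e
        · have ha' : a = u ∨ a = v := by
            have h5 : a ∈ s(u, v) := by rw [hqe] at hq'; exact hq'
            simpa using h5
          obtain ⟨q1, qb⟩ := q
          simp only at hqe
          subst hqe
          cases qb <;> rcases ha' with rfl | rfl
          · rw [hσ1, hσ4]; exact Or.inl (hmid true).2
          · rw [hσ3, hσ4]; exact Or.inl (hmid false).2
          · rw [hσ1, hσ2]; exact Or.inl (hmid true).1
          · rw [hσ3, hσ2]; exact Or.inl (hmid false).1
        · have hq1 : q ≠ (e, true) := fun hcon => hqe (by rw [hcon])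
          have hq0 : q ≠ (e, false) := fun hcon => hqe (by rw [hcon])
          have hσq : σ (Sum.inr q) = Sum.inr q :=
            hσfix _ (by simp) (by simp [hq1]) (by simp) (by simp [hq0])
          have comp0 : anc (Sum.inl a) (Sum.inr q) ∨ anc (Sum.inr q) (Sum.inl a) := hedge _ _ hq
          by_cases hau : a = u
          · subst hau
            rw [hσ1, hσq]
            rcases comp0 with h' | h'
            · exact Or.inl (htrans _ _ _ (hmid true).1 h')
            · exact hchain _ _ _ (hmid true).1 h'
          · by_cases hav : a = v
            · subst hav
              rw [hσ3, hσq]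
              rcases comp0 with h' | h'
              · exact Or.inl (htrans _ _ _ (hmid false).2 h')
              · exact hchain _ _ _ (hmid false).2 h'
            · rw [hσfix _ (by simp [hau]) (by simp) (by simp [hav]) (by simp), hσq]
              exact comp0
      rintro (a | p) (b' | q) hadj
      · exact absurd hadj not_false
      · exact key a q hadj
      · exact Or.symm (key b' p hadj.symm)
      · exact absurd hadj not_false
    have hpre : ∀ s : Set (V ⊕ (G.edgeSet × Bool)), ((⇑σ) ⁻¹' s).ncard = s.ncard := by
      intro s
      rw [← Equiv.image_symm_eq_preimage, Set.ncard_image_of_injective _ σ.symm.injective]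
    have hw' : ∀ y, {x | anc (σ x) (σ y)}.ncard ≤ h := by
      intro y
      have h5 : {x | anc (σ x) (σ y)} = (⇑σ) ⁻¹' {x | anc x (σ y)} := rfl
      rw [h5, hpre]
      exact hw _
    have hmem : (∑ w : V, {x | anc (σ x) (σ (Sum.inl w))}.ncard) ∈ T := ⟨_, hforest', hw', rfl⟩
    have hlt : (∑ w : V, {x | anc (σ x) (σ (Sum.inl w))}.ncard) < sInf T := by
      rw [hΦ]
      refine Finset.sum_lt_sum ?_ ⟨u, Finset.mem_univ u, ?_⟩
      · intro w _
        have h5 : {x | anc (σ x) (σ (Sum.inl w))} = (⇑σ) ⁻¹' {x | anc x (σ (Sum.inl w))} := rfl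
        rw [h5, hpre]
        by_cases hwu : w = u
        · subst hwu
          rw [hσ1]
          exact le_of_lt (hstrict _ _ (hmid true).1 (by simp))
        · by_cases hwv : w = v
          · subst hwv
            rw [hσ3]
            exact le_of_lt (hstrict _ _ (hmid false).2 (by simp))
          · rw [hσfix _ (by simp [hwu]) (by simp) (by simp [hwv]) (by simp)]
      · have h5 : {x | anc (σ x) (σ (Sum.inl u))} = (⇑σ) ⁻¹' {x | anc x (σ (Sum.inl u))} := rfl
        rw [h5, hpre, hσ1]
        exact hstrict _ _ (hmid true).1 (by simp)
    exact absurd (hmin _ hmem) (not_le_of_gt hlt)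
  -- build the elimination forest for G
  have hforestG : IsElimForest G
      (fun a b => a = b ∨ (anc (Sum.inl a) (Sum.inl b) ∧ (∃ z, G.Adj a z) ∧ (∃ z, G.Adj b z))) := by
    refine ⟨fun a => Or.inl rfl, ?_, ?_, ?_, ?_⟩
    · rintro a b (rfl | ⟨h1, -, -⟩) h2
      · rfl
      · rcases h2 with rfl | ⟨h2, -, -⟩
        · rfl
        · exact Sum.inl_injective (hanti _ _ h1 h2)
    · rintro a b c (rfl | ⟨h1, ha1, hb1⟩) h2
      · exact h2
      · rcases h2 with rfl | ⟨h2, -, hc1⟩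
        · exact Or.inr ⟨h1, ha1, hb1⟩
        · exact Or.inr ⟨htrans _ _ _ h1 h2, ha1, hc1⟩
    · rintro a b c (rfl | ⟨h1, ha1, hb1⟩) h2
      · exact Or.inr h2
      · rcases h2 with rfl | ⟨h2, hb2, -⟩
        · exact Or.inl (Or.inr ⟨h1, ha1, hb1⟩)
        · rcases hchain _ _ _ h1 h2 with h' | h'
          · exact Or.inl (Or.inr ⟨h', ha1, hb2⟩)
          · exact Or.inr (Or.inr ⟨h', hb2, ha1⟩)
    · intro a b hab
      rcases hgood a b hab with h' | h'
      · exact Or.inl (Or.inr ⟨h', ⟨b, hab⟩, ⟨a, hab.symm⟩⟩)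
      · exact Or.inr (Or.inr ⟨h', ⟨a, hab.symm⟩, ⟨b, hab⟩⟩)
  have hwidthG : ∀ a : V,
      {b | b = a ∨ (anc (Sum.inl b) (Sum.inl a) ∧ (∃ z, G.Adj b z) ∧ (∃ z, G.Adj a z))}.ncard
        ≤ h - 1 := by
    intro a
    by_cases hNIa : ∃ z, G.Adj a z
    · obtain ⟨z, haz⟩ := hNIa
      have hef' : s(a, z) ∈ G.edgeSet := G.mem_edgeSet.mpr haz
      have hadjm : (Subdiv G).Adj (Sum.inl a) (Sum.inr (⟨s(a, z), hef'⟩, false)) := by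
        show a ∈ ((⟨s(a, z), hef'⟩ : G.edgeSet) : Sym2 V)
        simp
      have hsub : Sum.inl ''
          {b | b = a ∨ (anc (Sum.inl b) (Sum.inl a) ∧ (∃ z, G.Adj b z) ∧ (∃ z, G.Adj a z))} ⊆
          {x | anc x (Sum.inl a)} := by
        rintro x ⟨b, hb, rfl⟩
        rcases hb with rfl | ⟨h1, -, -⟩
        · exact hrefl _
        · exact h1
      have hcard : {b | b = a ∨ (anc (Sum.inl b) (Sum.inl a) ∧
            (∃ z, G.Adj b z) ∧ (∃ z, G.Adj a z))}.ncard
          = ((Sum.inl : V → V ⊕ (G.edgeSet × Bool)) '' {b | b = a ∨ (anc (Sum.inl b) (Sum.inl a) ∧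
            (∃ z, G.Adj b z) ∧ (∃ z, G.Adj a z))}).ncard :=
        (Set.ncard_image_of_injective _ Sum.inl_injective).symm
      rcases hedge _ _ hadjm with hc1 | hc1
      · -- a is below the midpoint
        have hlt' : {x | anc x (Sum.inl a)}.ncard < {x | anc x (Sum.inr (⟨s(a, z), hef'⟩, false))}.ncard := by
          refine Set.ncard_lt_ncard ?_ (Set.toFinite _)
          refine (Set.ssubset_iff_of_subset (fun x hx => htrans _ _ _ hx hc1)).mpr
            ⟨Sum.inr (⟨s(a, z), hef'⟩, false), hrefl _, fun hcon => ?_⟩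
          have := hanti _ _ hc1 hcon
          simp at this
        have h6 : {x | anc x (Sum.inr (⟨s(a, z), hef'⟩, false))}.ncard ≤ h := hw _
        have h7 := Set.ncard_le_ncard hsub (Set.toFinite _)
        omega
      · -- the midpoint is above a
        have hsub2 : Sum.inl ''
            {b | b = a ∨ (anc (Sum.inl b) (Sum.inl a) ∧ (∃ z, G.Adj b z) ∧ (∃ z, G.Adj a z))} ⊆
            {x | anc x (Sum.inl a)} \ {Sum.inr (⟨s(a, z), hef'⟩, false)} := by
          rintro x ⟨b, hb, rfl⟩
          exact ⟨hsub ⟨b, hb, rfl⟩, by simp⟩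
        have h6 : ({x | anc x (Sum.inl a)} \ {Sum.inr (⟨s(a, z), hef'⟩, false)}).ncard
            = {x | anc x (Sum.inl a)}.ncard - 1 :=
          Set.ncard_diff_singleton_of_mem (s := {x | anc x (Sum.inl a)}) hc1
        have h7 := Set.ncard_le_ncard hsub2 (Set.toFinite _)
        have h8 : {x | anc x (Sum.inl a)}.ncard ≤ h := hw _
        omega
    · have hset : {b | b = a ∨ (anc (Sum.inl b) (Sum.inl a) ∧
          (∃ z, G.Adj b z) ∧ (∃ z, G.Adj a z))} = {a} := by
        ext b
        simp only [Set.mem_setOf_eq, Set.mem_singleton_iff]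
        constructor
        · rintro (rfl | ⟨-, -, h'⟩)
          · rfl
          · exact absurd h' hNIa
        · rintro rfl
          exact Or.inl rfl
      rw [hset, Set.ncard_singleton]
      omega
  have := treedepth_le hforestG hwidthG
  omega
end subdivAux

/-- If `G` has at least one edge and `H` is obtained from `G` by replacing each edge by two
internally disjoint paths of length 2, then the treedepth of `H` equals the treedepth of
`G` plus one. -/
theorem stmt14 {V : Type*} [Fintype V] (G : SimpleGraph V) (hE : G.edgeSet.Nonempty) :
    treedepth (Subdiv G) = treedepth G + 1 := by
  have h1 := subdivAux.upper G
  have h2 := subdivAux.lower G hE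
  omega
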